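/- Let x_1, ..., x_n ∈ ℝ^p, let F ⊆ {1,...,n} with |F| = m ≥ 3, let ε ≥ 0 satisfy ε n < m/2, and let w_{ij} be symmetric nonnegative affinities with w_{ij} = 1 whenever i, j ∈ F with i ≠ j, and 0 ≤ w_{ij} ≤ ε whenever not both i, j lie in F. Set E = Σ_{i=1}^n ‖x_i − x̄‖² with x̄ the mean of the data. Then for every γ > 2√E/(m/2 − ε n), every minimizer u = (u_1, ..., u_n) of the convex clustering energy E_γ satisfies u_i = u_j for all i, j ∈ F; that is, all centroids belonging to the folder F are fused into a single point. -/

import Mathlib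

open Finset

/-- The convex clustering energy
`E_γ(u) = ∑ᵢ ‖xᵢ − uᵢ‖² + γ ∑_{i<j} w i j ‖uᵢ − uⱼ‖`. -/
noncomputable def clusterEnergy {p n : ℕ} (x : Fin n → EuclideanSpace ℝ (Fin p))
    (w : Fin n → Fin n → ℝ) (γ : ℝ) (u : Fin n → EuclideanSpace ℝ (Fin p)) : ℝ :=
  ∑ i, ‖x i - u i‖ ^ 2 +
    γ * ∑ i, ∑ j ∈ univ.filter (fun j => i < j), w i j * ‖u i - u j‖

open RealInnerProductSpace

lemma inner_key {p : ℕ} (a b c e : EuclideanSpace ℝ (Fin p)) :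
    ‖a - c‖^2 - ‖a - b‖^2 = 2*⟪a - e, b - c⟫ - ‖b - c‖^2 + 2*⟪e - c, b - c⟫ := by
  have h1 : a - b = (a - c) - (b - c) := by abel
  have h2 : ⟪a - e, b - c⟫ + ⟪e - c, b - c⟫ = ⟪a - c, b - c⟫ := by
    rw [← inner_add_left]; congr 1; abel
  have h3 := @norm_sub_sq_real (EuclideanSpace ℝ (Fin p)) _ _ (a - c) (b - c)
  rw [h1]
  linarith [h3, h2]

lemma double_sum_lt {n : ℕ} (f : Fin n → Fin n → ℝ) (hsym : ∀ i j, f i j = f j i)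
    (hdiag : ∀ i, f i i = 0) :
    ∑ i, ∑ j ∈ univ.filter (fun j => i < j), f i j = (∑ i, ∑ j, f i j) / 2 := by
  have key : ∑ i, ∑ j, f i j
      = ∑ i, ∑ j, ((if i < j then f i j else 0) + (if j < i then f i j else 0)) := by
    refine Finset.sum_congr rfl fun i _ => Finset.sum_congr rfl fun j _ => ?_
    rcases lt_trichotomy i j with h | h | h
    · simp [h, not_lt_of_gt h]
    · simp [h, hdiag]
    · simp [h, not_lt_of_gt h]
  have hswap : ∑ i, ∑ j, (if j < i then f i j else 0)
      = ∑ i, ∑ j, (if i < j then f i j else 0) := by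
    rw [Finset.sum_comm]
    refine Finset.sum_congr rfl fun i _ => Finset.sum_congr rfl fun j _ => ?_
    rw [hsym]
  have hfil : ∀ i : Fin n, ∑ j ∈ univ.filter (fun j => i < j), f i j
      = ∑ j, if i < j then f i j else 0 := fun i => Finset.sum_filter _ _
  simp only [hfil]
  rw [eq_div_iff (by norm_num : (2:ℝ) ≠ 0), key]
  simp only [Finset.sum_add_distrib]
  rw [hswap]; ring

set_option maxHeartbeats 1000000 in
/-- If the affinities are `1` within a folder `F` of size `m ≥ 3` and at most `ε`
outside, with `εn < m/2`, then for every `γ > 2√E/(m/2 − εn)` (with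
`E = ∑ᵢ ‖xᵢ − x̄‖²`), every minimizer of the convex clustering energy has all of the
centroids belonging to `F` fused into a single point. -/
theorem folder_fusion {p n : ℕ}
    (x : Fin n → EuclideanSpace ℝ (Fin p))
    (F : Finset (Fin n)) (m : ℕ) (hmF : F.card = m) (hm : 3 ≤ m)
    (ε : ℝ) (hε : 0 ≤ ε) (hεn : ε * n < (m : ℝ) / 2)
    (w : Fin n → Fin n → ℝ) (hw0 : ∀ i j, 0 ≤ w i j) (hwsym : ∀ i j, w i j = w j i)
    (hwF : ∀ i ∈ F, ∀ j ∈ F, i ≠ j → w i j = 1)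
    (hwout : ∀ i j, ¬(i ∈ F ∧ j ∈ F) → w i j ≤ ε)
    (γ : ℝ)
    (hγ : 2 * Real.sqrt (∑ i, ‖x i - (n : ℝ)⁻¹ • ∑ k, x k‖ ^ 2) /
            ((m : ℝ) / 2 - ε * n) < γ)
    (u : Fin n → EuclideanSpace ℝ (Fin p))
    (hmin : ∀ u' : Fin n → EuclideanSpace ℝ (Fin p),
      clusterEnergy x w γ u ≤ clusterEnergy x w γ u') :
    ∀ i ∈ F, ∀ j ∈ F, u i = u j := by
  classical
  set xb : EuclideanSpace ℝ (Fin p) := (n : ℝ)⁻¹ • ∑ k, x k with hxb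
  set Es : ℝ := ∑ i, ‖x i - xb‖ ^ 2 with hEs
  have hm0 : (0:ℝ) < (m:ℝ) := by
    have : (0:ℕ) < m := by omega
    exact_mod_cast this
  set ub : EuclideanSpace ℝ (Fin p) := (m : ℝ)⁻¹ • ∑ i ∈ F, u i with hub
  set u' : Fin n → EuclideanSpace ℝ (Fin p) := fun i => if i ∈ F then ub else u i with hu'
  set d : Fin n → ℝ := fun i => ‖u' i - u i‖ with hd
  set S : ℝ := ∑ i, d i with hS
  have hdnonneg : ∀ i, 0 ≤ d i := fun i => norm_nonneg _
  have hSnonneg : 0 ≤ S := Finset.sum_nonneg fun i _ => hdnonneg i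
  have hdF : ∀ i ∈ F, d i = ‖u i - ub‖ := by
    intro i hi; simp only [hd, hu', if_pos hi]; exact norm_sub_rev _ _
  have hdnF : ∀ i, i ∉ F → d i = 0 := by
    intro i hi; simp [hd, hu', if_neg hi]
  have hSF : S = ∑ i ∈ F, ‖u i - ub‖ := by
    rw [hS, ← Finset.sum_subset (Finset.subset_univ F) (fun i _ hi => hdnF i hi)]
    exact Finset.sum_congr rfl fun i hi => hdF i hi
  -- the deviations from the folder mean sum to zero
  have hzero : ∑ i ∈ F, (u i - ub) = 0 := by
    rw [Finset.sum_sub_distrib, Finset.sum_const, hmF, hub,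
      ← Nat.cast_smul_eq_nsmul ℝ, smul_smul, mul_inv_cancel₀ hm0.ne', one_smul, sub_self]
  have hmsmul : ∀ i : Fin n, ∑ j ∈ F, (u i - u j) = (m:ℝ) • (u i - ub) := by
    intro i
    have h1 : ∀ j : Fin n, u i - u j = (u i - ub) - (u j - ub) := fun j => by abel
    calc ∑ j ∈ F, (u i - u j) = ∑ j ∈ F, ((u i - ub) - (u j - ub)) := by
          exact Finset.sum_congr rfl fun j _ => h1 j
      _ = (∑ j ∈ F, (u i - ub)) - ∑ j ∈ F, (u j - ub) := Finset.sum_sub_distrib _ _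
      _ = (m:ℝ) • (u i - ub) := by
          rw [hzero, sub_zero, Finset.sum_const, hmF, ← Nat.cast_smul_eq_nsmul ℝ]
  have hEnonneg : 0 ≤ Es := Finset.sum_nonneg fun i _ => sq_nonneg _
  have hxE : ∀ i, ‖x i - xb‖ ≤ Real.sqrt Es := by
    intro i
    rw [show ‖x i - xb‖ = Real.sqrt (‖x i - xb‖^2) from (Real.sqrt_sq (norm_nonneg _)).symm]
    have h := Finset.single_le_sum (f := fun j => ‖x j - xb‖^2) (fun j _ => sq_nonneg _) (mem_univ i)
    rw [← hEs] at h
    exact Real.sqrt_le_sqrt h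
  -- quadratic part
  have hquad : ∑ i, ‖x i - u' i‖^2 ≤ ∑ i, ‖x i - u i‖^2 + 2 * Real.sqrt Es * S := by
    have hdiff : ∑ i, (‖x i - u' i‖^2 - ‖x i - u i‖^2)
        = ∑ i ∈ F, (‖x i - ub‖^2 - ‖x i - u i‖^2) := by
      rw [← Finset.sum_subset (Finset.subset_univ F)
        (fun i _ hi => by simp [hu', if_neg hi])]
      exact Finset.sum_congr rfl fun i hi => by simp [hu', if_pos hi]
    have hterm : ∑ i ∈ F, (‖x i - ub‖^2 - ‖x i - u i‖^2)
        = ∑ i ∈ F, (2*⟪x i - xb, u i - ub⟫ - ‖u i - ub‖^2)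
          + ∑ i ∈ F, 2*⟪xb - ub, u i - ub⟫ := by
      rw [← Finset.sum_add_distrib]
      refine Finset.sum_congr rfl fun i _ => ?_
      have := inner_key (x i) (u i) ub xb
      linarith
    have hcross : ∑ i ∈ F, 2*⟪xb - ub, u i - ub⟫ = (0:ℝ) := by
      rw [← Finset.mul_sum, ← inner_sum, hzero, inner_zero_right, mul_zero]
    have hbd : ∑ i ∈ F, (2*⟪x i - xb, u i - ub⟫ - ‖u i - ub‖^2)
        ≤ ∑ i ∈ F, 2 * Real.sqrt Es * ‖u i - ub‖ := by
      refine Finset.sum_le_sum fun i _ => ?_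
      have h1 : ⟪x i - xb, u i - ub⟫ ≤ ‖x i - xb‖ * ‖u i - ub‖ := real_inner_le_norm _ _
      have h2 : ‖x i - xb‖ * ‖u i - ub‖ ≤ Real.sqrt Es * ‖u i - ub‖ :=
        mul_le_mul_of_nonneg_right (hxE i) (norm_nonneg _)
      nlinarith [sq_nonneg ‖u i - ub‖]
    have hfin : ∑ i ∈ F, 2 * Real.sqrt Es * ‖u i - ub‖ = 2 * Real.sqrt Es * S := by
      rw [hSF, Finset.mul_sum]
    have hsub : ∑ i, (‖x i - u' i‖^2 - ‖x i - u i‖^2)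
        = ∑ i, ‖x i - u' i‖^2 - ∑ i, ‖x i - u i‖^2 := Finset.sum_sub_distrib _ _
    linarith [hdiff, hterm, hcross, hbd, hfin, hsub]
  -- pairwise penalty bound
  have hpair : ∀ i j, w i j * ‖u' i - u' j‖ ≤ w i j * ‖u i - u j‖
      + ((if i ∈ F ∧ j ∈ F then -‖u i - u j‖ else 0) + ε * (d i + d j)) := by
    intro i j
    have hdd : 0 ≤ ε * (d i + d j) :=
      mul_nonneg hε (add_nonneg (hdnonneg i) (hdnonneg j))
    by_cases hij : i ∈ F ∧ j ∈ F
    · obtain ⟨hi, hj⟩ := hij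
      rw [if_pos ⟨hi, hj⟩]
      have hu'i : u' i = ub := if_pos hi
      have hu'j : u' j = ub := if_pos hj
      rw [hu'i, hu'j, sub_self, norm_zero, mul_zero]
      by_cases hij' : i = j
      · subst hij'; simp only [sub_self, norm_zero, mul_zero, neg_zero, add_zero, zero_add]
        linarith
      · rw [hwF i hi j hj hij', one_mul]; linarith
    · rw [if_neg hij]
      have hw1 : w i j ≤ ε := hwout i j hij
      have htri : ‖u' i - u' j‖ ≤ ‖u i - u j‖ + (d i + d j) := by
        have he : u' i - u' j = (u' i - u i) + (u i - u j) + (u j - u' j) := by abel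
        have h1 := norm_add₃_le (a := u' i - u i) (b := u i - u j) (c := u j - u' j)
        rw [← he] at h1
        have h2 : ‖u j - u' j‖ = d j := by rw [hd]; exact (norm_sub_rev _ _).symm
        have h3 : ‖u' i - u i‖ = d i := rfl
        rw [h2, h3] at h1; linarith
      have h1 : w i j * ‖u' i - u' j‖ ≤ w i j * (‖u i - u j‖ + (d i + d j)) :=
        mul_le_mul_of_nonneg_left htri (hw0 i j)
      have h2 : w i j * (d i + d j) ≤ ε * (d i + d j) :=
        mul_le_mul_of_nonneg_right hw1 (add_nonneg (hdnonneg i) (hdnonneg j))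
      nlinarith
  clear_value xb Es ub u' d S
  -- full double-sum penalty bound
  have hif : ∑ i : Fin n, ∑ j : Fin n, (if i ∈ F ∧ j ∈ F then -‖u i - u j‖ else 0)
      = -∑ i ∈ F, ∑ j ∈ F, ‖u i - u j‖ := by
    have h1 : ∀ i : Fin n, ∑ j : Fin n, (if i ∈ F ∧ j ∈ F then -‖u i - u j‖ else 0)
        = if i ∈ F then ∑ j ∈ F, -‖u i - u j‖ else 0 := by
      intro i
      by_cases hi : i ∈ F
      · rw [if_pos hi]
        rw [show (∑ j : Fin n, (if i ∈ F ∧ j ∈ F then -‖u i - u j‖ else 0))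
            = ∑ j : Fin n, (if j ∈ F then -‖u i - u j‖ else 0) from
          Finset.sum_congr rfl fun j _ => by simp [hi]]
        rw [Finset.sum_ite_mem, Finset.univ_inter]
      · rw [if_neg hi]
        exact Finset.sum_eq_zero fun j _ => by simp [hi]
    rw [show (∑ i : Fin n, ∑ j : Fin n, (if i ∈ F ∧ j ∈ F then -‖u i - u j‖ else 0))
        = ∑ i : Fin n, (if i ∈ F then ∑ j ∈ F, -‖u i - u j‖ else 0) from
      Finset.sum_congr rfl fun i _ => h1 i]
    rw [Finset.sum_ite_mem, Finset.univ_inter]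
    simp only [Finset.sum_neg_distrib]
  have hdd2 : ∑ i : Fin n, ∑ j : Fin n, ε * (d i + d j) = 2 * ε * (n : ℝ) * S := by
    have h1 : ∀ i : Fin n, ∑ j : Fin n, ε * (d i + d j) = (n:ℝ) * (ε * d i) + ε * S := by
      intro i
      rw [show (∑ j : Fin n, ε * (d i + d j)) = ∑ j : Fin n, (ε * d i + ε * d j) from
        Finset.sum_congr rfl fun j _ => by ring]
      rw [Finset.sum_add_distrib, Finset.sum_const, card_univ, Fintype.card_fin,
        ← Finset.mul_sum, ← hS, nsmul_eq_mul]
    rw [show (∑ i : Fin n, ∑ j : Fin n, ε * (d i + d j))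
        = ∑ i : Fin n, ((n:ℝ) * (ε * d i) + ε * S) from
      Finset.sum_congr rfl fun i _ => h1 i]
    rw [Finset.sum_add_distrib, Finset.sum_const, card_univ, Fintype.card_fin, nsmul_eq_mul]
    rw [show (∑ i : Fin n, (n:ℝ) * (ε * d i)) = (n:ℝ) * (ε * ∑ i, d i) by
      rw [Finset.mul_sum, Finset.mul_sum]]
    rw [← hS]; ring
  have hFF : (m:ℝ) * S ≤ ∑ i ∈ F, ∑ j ∈ F, ‖u i - u j‖ := by
    have h1 : ∀ i ∈ F, (m:ℝ) * ‖u i - ub‖ ≤ ∑ j ∈ F, ‖u i - u j‖ := by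
      intro i _
      have h2 : ‖∑ j ∈ F, (u i - u j)‖ ≤ ∑ j ∈ F, ‖u i - u j‖ := norm_sum_le _ _
      rw [hmsmul i, norm_smul, Real.norm_eq_abs, abs_of_pos hm0] at h2
      exact h2
    calc (m:ℝ) * S = ∑ i ∈ F, (m:ℝ) * ‖u i - ub‖ := by rw [hSF, Finset.mul_sum]
      _ ≤ ∑ i ∈ F, ∑ j ∈ F, ‖u i - u j‖ := Finset.sum_le_sum h1
  have hfull : ∑ i : Fin n, ∑ j : Fin n, w i j * ‖u' i - u' j‖
      ≤ ∑ i : Fin n, ∑ j : Fin n, w i j * ‖u i - u j‖ + (2 * ε * (n:ℝ) * S - (m:ℝ) * S) := by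
    have step1 : ∑ i : Fin n, ∑ j : Fin n, w i j * ‖u' i - u' j‖
        ≤ ∑ i : Fin n, ∑ j : Fin n, (w i j * ‖u i - u j‖
          + ((if i ∈ F ∧ j ∈ F then -‖u i - u j‖ else 0) + ε * (d i + d j))) :=
      Finset.sum_le_sum fun i _ => Finset.sum_le_sum fun j _ => hpair i j
    have expand : ∑ i : Fin n, ∑ j : Fin n, (w i j * ‖u i - u j‖
          + ((if i ∈ F ∧ j ∈ F then -‖u i - u j‖ else 0) + ε * (d i + d j)))
        = ∑ i : Fin n, ∑ j : Fin n, w i j * ‖u i - u j‖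
          + (∑ i : Fin n, ∑ j : Fin n, (if i ∈ F ∧ j ∈ F then -‖u i - u j‖ else 0)
            + ∑ i : Fin n, ∑ j : Fin n, ε * (d i + d j)) := by
      simp only [Finset.sum_add_distrib]
    rw [expand, hif, hdd2] at step1
    linarith [hFF]
  -- filtered penalty bound
  have hPu' : ∑ i, ∑ j ∈ univ.filter (fun j => i < j), w i j * ‖u' i - u' j‖
      = (∑ i : Fin n, ∑ j : Fin n, w i j * ‖u' i - u' j‖) / 2 :=
    double_sum_lt _ (fun i j => by
      show w i j * ‖u' i - u' j‖ = w j i * ‖u' j - u' i‖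
      rw [hwsym i j, norm_sub_rev]) (fun i => by
      show w i i * ‖u' i - u' i‖ = 0
      simp)
  have hPu : ∑ i, ∑ j ∈ univ.filter (fun j => i < j), w i j * ‖u i - u j‖
      = (∑ i : Fin n, ∑ j : Fin n, w i j * ‖u i - u j‖) / 2 :=
    double_sum_lt _ (fun i j => by
      show w i j * ‖u i - u j‖ = w j i * ‖u j - u i‖
      rw [hwsym i j, norm_sub_rev]) (fun i => by
      show w i i * ‖u i - u i‖ = 0
      simp)
  set c : ℝ := ε * (n:ℝ) * S - (m:ℝ) / 2 * S with hc
  clear_value c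
  have hpen : ∑ i, ∑ j ∈ univ.filter (fun j => i < j), w i j * ‖u' i - u' j‖
      ≤ (∑ i, ∑ j ∈ univ.filter (fun j => i < j), w i j * ‖u i - u j‖) + c := by
    rw [hPu', hPu, hc]; linarith [hfull]
  have hγ0 : 0 < γ := by
    have hpos : (0:ℝ) < (m:ℝ)/2 - ε * n := by linarith
    have hsq : (0:ℝ) ≤ Real.sqrt Es := Real.sqrt_nonneg _
    have : (0:ℝ) ≤ 2 * Real.sqrt Es / ((m:ℝ)/2 - ε * n) :=
      div_nonneg (by linarith) hpos.le
    linarith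
  have hEne : clusterEnergy x w γ u' ≤ clusterEnergy x w γ u
      + (2 * Real.sqrt Es * S + γ * c) := by
    unfold clusterEnergy
    have h2 := mul_le_mul_of_nonneg_left hpen hγ0.le
    rw [mul_add] at h2
    linarith [hquad]
  have hmin' := hmin u'
  have hge : 0 ≤ 2 * Real.sqrt Es * S + γ * c :=
    (le_add_iff_nonneg_right _).mp (le_trans hmin' hEne)
  have hneg : 2 * Real.sqrt Es < γ * ((m:ℝ)/2 - ε * n) := by
    have hpos : (0:ℝ) < (m:ℝ)/2 - ε * n := by linarith
    rw [div_lt_iff₀ hpos] at hγ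
    linarith
  have hS0 : S = 0 := by
    have hcS : γ * c = γ * (ε * (n:ℝ)) * S - γ * ((m:ℝ)/2) * S := by rw [hc]; ring
    rcases eq_or_lt_of_le hSnonneg with h | h
    · exact h.symm
    · exfalso
      have h5 := mul_lt_mul_of_pos_right hneg h
      nlinarith [hge, hcS, h5]
  have hall : ∀ i ∈ F, u i = ub := by
    intro i hi
    have hdi : d i = 0 := by
      have h0 : ∑ k, d k = 0 := by rw [← hS]; exact hS0
      exact (Finset.sum_eq_zero_iff_of_nonneg (fun k _ => hdnonneg k)).mp h0 i (mem_univ i)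
    rw [hdF i hi, norm_eq_zero, sub_eq_zero] at hdi
    exact hdi
  intro i hi j hj
  rw [hall i hi, hall j hj]
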